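/- Let R = ℤ[a_α, a_λ, u_{2α}, u_λ]/(2a_α, 4a_λ, a_α²u_λ − 2a_λu_{2α}). Then as an abelian group R decomposes as a direct sum: ℤ[u_{2α}, u_λ] ⊕ (ℤ/4)[u_{2α}, u_λ]⟨a_λⁱ⟩_{i≥1} ⊕ (ℤ/2)[u_{2α}, a_λ]⟨a_αⁱ⟩_{i≥1} ⊕ (ℤ/2)[u_{2α}, a_λ]⟨u_λⁱ⟩_{i≥1}⟨a_α⟩; equivalently, the monomials u_{2α}^j u_λ^k (free of additive order ∞), a_λⁱ u_{2α}^j u_λ^k with i ≥ 1 (of additive order 4), a_αⁱ a_λ^l u_{2α}^j with i ≥ 1 (order 2), and a_α a_λ^l u_{2α}^j u_λ^k with k ≥ 1 (order 2) form a ℤ-basis of R in the sense that R is the direct sum of the cyclic groups they generate. -/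

import Mathlib

open MvPolynomial

/-- The ring `R = ℤ[a_α, a_λ, u_{2α}, u_λ]/(2a_α, 4a_λ, a_α²u_λ − 2a_λu_{2α})`
(variables `0,1,2,3 = a_α, a_λ, u_{2α}, u_λ`). -/
noncomputable abbrev posConeC4 : Type :=
  MvPolynomial (Fin 4) ℤ ⧸ Ideal.span
    ({(2 : MvPolynomial (Fin 4) ℤ) * X 0, 4 * X 1, (X 0) ^ 2 * X 3 - 2 * X 1 * X 2} :
      Set (MvPolynomial (Fin 4) ℤ))

/-- Index of the `ℤ`-basis monomials in the additive decomposition of `posConeC4`. -/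
inductive PosConeIdx : Type
  /-- `u_{2α}^j u_λ^k`, of infinite additive order -/
  | free (j k : ℕ)
  /-- `a_λ^{i+1} u_{2α}^j u_λ^k`, of additive order 4 -/
  | four (i j k : ℕ)
  /-- `a_α^{i+1} a_λ^l u_{2α}^j`, of additive order 2 -/
  | twoA (i l j : ℕ)
  /-- `a_α a_λ^l u_{2α}^j u_λ^{k+1}`, of additive order 2 -/
  | twoU (l j k : ℕ)

/-- The corresponding monomial classes in `posConeC4`. -/
noncomputable def posConeGen : PosConeIdx → posConeC4 :=
  letI aA : posConeC4 := Ideal.Quotient.mk _ (X 0)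
  letI aL : posConeC4 := Ideal.Quotient.mk _ (X 1)
  letI u2 : posConeC4 := Ideal.Quotient.mk _ (X 2)
  letI uL : posConeC4 := Ideal.Quotient.mk _ (X 3)
  fun i => match i with
  | .free j k => u2 ^ j * uL ^ k
  | .four i j k => aL ^ (i + 1) * u2 ^ j * uL ^ k
  | .twoA i l j => aA ^ (i + 1) * aL ^ l * u2 ^ j
  | .twoU l j k => aA * aL ^ l * u2 ^ j * uL ^ (k + 1)

deriving instance DecidableEq for PosConeIdx

namespace PC

def tgt : PosConeIdx → Type
  | .free _ _ => ℤ
  | .four _ _ _ => ZMod 4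
  | .twoA _ _ _ => ZMod 2
  | .twoU _ _ _ => ZMod 2

instance : ∀ i, AddCommGroup (tgt i)
  | .free _ _ => inferInstanceAs (AddCommGroup ℤ)
  | .four _ _ _ => inferInstanceAs (AddCommGroup (ZMod 4))
  | .twoA _ _ _ => inferInstanceAs (AddCommGroup (ZMod 2))
  | .twoU _ _ _ => inferInstanceAs (AddCommGroup (ZMod 2))

def one : ∀ i, tgt i
  | .free _ _ => (1 : ℤ)
  | .four _ _ _ => (1 : ZMod 4)
  | .twoA _ _ _ => (1 : ZMod 2)
  | .twoU _ _ _ => (1 : ZMod 2)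

abbrev M : Type := DirectSum PosConeIdx tgt

noncomputable def e (i : PosConeIdx) : M := DirectSum.of tgt i (one i)

noncomputable def nf (p q r s : ℕ) : M :=
  match p with
  | 0 => match q with
    | 0 => e (.free r s)
    | q+1 => e (.four q r s)
  | p+1 => match s with
    | 0 => e (.twoA p q r)
    | s+1 => match p with
      | 0 => e (.twoU q r s)
      | 1 => (2:ℤ) • e (.four q (r+1) s)
      | _ => 0


noncomputable def psi : MvPolynomial (Fin 4) ℤ →+ M :=
  (Finsupp.liftAddHom (α := Fin 4 →₀ ℕ)
    (fun d => (zmultiplesHom M) (nf (d 0) (d 1) (d 2) (d 3)))).comp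
    (AddMonoidAlgebra.coeffAddEquiv (R := ℤ) (M := Fin 4 →₀ ℕ)).toAddMonoidHom

theorem psi_monomial (d : Fin 4 →₀ ℕ) (c : ℤ) :
    psi (monomial d c) = c • nf (d 0) (d 1) (d 2) (d 3) := by
  show Finsupp.liftAddHom _ (Finsupp.single d c) = _
  exact Finsupp.liftAddHom_apply_single _ _ _


theorem zsmul_of (n : ℤ) (i : PosConeIdx) (x : tgt i) :
    n • DirectSum.of tgt i x = DirectSum.of tgt i (n • x) :=
  (map_zsmul (DirectSum.of tgt i) n x).symm

theorem two_smul_twoA (i l j : ℕ) : (2:ℤ) • e (.twoA i l j) = 0 := by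
  rw [e, zsmul_of]
  have : (2:ℤ) • (one (.twoA i l j)) = 0 := by
    show (2:ℤ) • (1 : ZMod 2) = 0
    decide
  rw [this, map_zero]

theorem two_smul_twoU (l j k : ℕ) : (2:ℤ) • e (.twoU l j k) = 0 := by
  rw [e, zsmul_of]
  have : (2:ℤ) • (one (.twoU l j k)) = 0 := by
    show (2:ℤ) • (1 : ZMod 2) = 0
    decide
  rw [this, map_zero]

theorem four_smul_four (i j k : ℕ) : (4:ℤ) • e (.four i j k) = 0 := by
  rw [e, zsmul_of]
  have : (4:ℤ) • (one (.four i j k)) = 0 := by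
    show (4:ℤ) • (1 : ZMod 4) = 0
    decide
  rw [this, map_zero]

theorem gen1_eq : (2 : MvPolynomial (Fin 4) ℤ) * X 0 = monomial (Finsupp.single 0 1) 2 := by
  have : (2 : MvPolynomial (Fin 4) ℤ) = C 2 := by norm_num
  rw [this, X, C_mul_monomial, mul_one]

theorem gen2_eq : (4 : MvPolynomial (Fin 4) ℤ) * X 1 = monomial (Finsupp.single 1 1) 4 := by
  have : (4 : MvPolynomial (Fin 4) ℤ) = C 4 := by norm_num
  rw [this, X, C_mul_monomial, mul_one]

theorem gen3a_eq : (X 0 : MvPolynomial (Fin 4) ℤ) ^ 2 * X 3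
    = monomial (Finsupp.single 0 2 + Finsupp.single 3 1) 1 := by
  rw [X_pow_eq_monomial, X, monomial_mul, mul_one]

theorem gen3b_eq : (2 : MvPolynomial (Fin 4) ℤ) * X 1 * X 2
    = monomial (Finsupp.single 1 1 + Finsupp.single 2 1) 2 := by
  have : (2 : MvPolynomial (Fin 4) ℤ) = C 2 := by norm_num
  rw [this, X, X, mul_assoc, monomial_mul, C_mul_monomial]
  norm_num


theorem L1 (c : ℤ) (p q r s : ℕ) : (c * 2) • nf (p+1) q r s = 0 := by
  rcases s with _ | s
  · show (c*2) • e (.twoA p q r) = 0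
    rw [mul_smul, two_smul_twoA, smul_zero]
  · rcases p with _ | _ | p
    · show (c*2) • e (.twoU q r s) = 0
      rw [mul_smul, two_smul_twoU, smul_zero]
    · show (c*2) • ((2:ℤ) • e (.four q (r+1) s)) = 0
      rw [smul_smul, show c * 2 * 2 = c * 4 from by ring, mul_smul, four_smul_four, smul_zero]
    · show (c*2) • (0 : M) = 0
      rw [smul_zero]

theorem L2 (c : ℤ) (q r s : ℕ) : (c * 4) • nf 0 (q+1) r s = 0 := by
  show (c*4) • e (.four q r s) = 0
  rw [mul_smul, four_smul_four, smul_zero]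

theorem K1 (d : Fin 4 →₀ ℕ) (c : ℤ) : psi (monomial d c * (2 * X 0)) = 0 := by
  rw [gen1_eq, monomial_mul, psi_monomial]
  have h0 : (d + Finsupp.single 0 1 : Fin 4 →₀ ℕ) 0 = d 0 + 1 := by simp
  have h1 : (d + Finsupp.single 0 1 : Fin 4 →₀ ℕ) 1 = d 1 := by
    simp [Finsupp.single_apply]
  have h2 : (d + Finsupp.single 0 1 : Fin 4 →₀ ℕ) 2 = d 2 := by
    simp [Finsupp.single_apply]
  have h3 : (d + Finsupp.single 0 1 : Fin 4 →₀ ℕ) 3 = d 3 := by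
    simp [Finsupp.single_apply]
  rw [h0, h1, h2, h3]
  exact L1 c (d 0) (d 1) (d 2) (d 3)

theorem K2 (d : Fin 4 →₀ ℕ) (c : ℤ) : psi (monomial d c * (4 * X 1)) = 0 := by
  rw [gen2_eq, monomial_mul, psi_monomial]
  have h0 : (d + Finsupp.single 1 1 : Fin 4 →₀ ℕ) 0 = d 0 := by simp [Finsupp.single_apply]
  have h1 : (d + Finsupp.single 1 1 : Fin 4 →₀ ℕ) 1 = d 1 + 1 := by simp
  have h2 : (d + Finsupp.single 1 1 : Fin 4 →₀ ℕ) 2 = d 2 := by simp [Finsupp.single_apply]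
  have h3 : (d + Finsupp.single 1 1 : Fin 4 →₀ ℕ) 3 = d 3 := by simp [Finsupp.single_apply]
  rw [h0, h1, h2, h3]
  rcases hp : d 0 with _ | p
  · exact L2 c (d 1) (d 2) (d 3)
  · rw [show c * 4 = (c * 2) * 2 from by ring]
    exact L1 (c*2) p (d 1 + 1) (d 2) (d 3)

theorem K3 (d : Fin 4 →₀ ℕ) (c : ℤ) :
    psi (monomial d c * ((X 0) ^ 2 * X 3 - 2 * X 1 * X 2)) = 0 := by
  rw [mul_sub, map_sub, gen3a_eq, gen3b_eq, monomial_mul, monomial_mul,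
    psi_monomial, psi_monomial]
  have h0 : (d + (Finsupp.single 0 2 + Finsupp.single 3 1) : Fin 4 →₀ ℕ) 0 = d 0 + 2 := by
    simp [Finsupp.single_apply]
  have h1 : (d + (Finsupp.single 0 2 + Finsupp.single 3 1) : Fin 4 →₀ ℕ) 1 = d 1 := by
    simp [Finsupp.single_apply]
  have h2 : (d + (Finsupp.single 0 2 + Finsupp.single 3 1) : Fin 4 →₀ ℕ) 2 = d 2 := by
    simp [Finsupp.single_apply]
  have h3 : (d + (Finsupp.single 0 2 + Finsupp.single 3 1) : Fin 4 →₀ ℕ) 3 = d 3 + 1 := by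
    simp [Finsupp.single_apply]
  have g0 : (d + (Finsupp.single 1 1 + Finsupp.single 2 1) : Fin 4 →₀ ℕ) 0 = d 0 := by
    simp [Finsupp.single_apply]
  have g1 : (d + (Finsupp.single 1 1 + Finsupp.single 2 1) : Fin 4 →₀ ℕ) 1 = d 1 + 1 := by
    simp [Finsupp.single_apply]
  have g2 : (d + (Finsupp.single 1 1 + Finsupp.single 2 1) : Fin 4 →₀ ℕ) 2 = d 2 + 1 := by
    simp [Finsupp.single_apply]
  have g3 : (d + (Finsupp.single 1 1 + Finsupp.single 2 1) : Fin 4 →₀ ℕ) 3 = d 3 := by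
    simp [Finsupp.single_apply]
  rw [h0, h1, h2, h3, g0, g1, g2, g3]
  rcases hp : d 0 with _ | p
  · have A : nf (0+2) (d 1) (d 2) (d 3 + 1) = (2:ℤ) • e (.four (d 1) (d 2 + 1) (d 3)) := rfl
    have B : nf 0 (d 1 + 1) (d 2 + 1) (d 3) = e (.four (d 1) (d 2 + 1) (d 3)) := rfl
    rw [A, B, smul_smul, sub_eq_zero]
    norm_num
  · have A : nf (p + 1 + 2) (d 1) (d 2) (d 3 + 1) = 0 := rfl
    rw [A, smul_zero, zero_sub, neg_eq_zero]
    exact L1 c p (d 1 + 1) (d 2 + 1) (d 3)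


theorem psi_mul_gen {g : MvPolynomial (Fin 4) ℤ} (hg : ∀ d c, psi (monomial d c * g) = 0)
    (f : MvPolynomial (Fin 4) ℤ) : psi (f * g) = 0 := by
  induction f using MvPolynomial.induction_on' with
  | monomial d c => exact hg d c
  | add p q hp hq => rw [add_mul, map_add, hp, hq, add_zero]

noncomputable abbrev I : Ideal (MvPolynomial (Fin 4) ℤ) :=
  Ideal.span {(2 : MvPolynomial (Fin 4) ℤ) * X 0, 4 * X 1, (X 0) ^ 2 * X 3 - 2 * X 1 * X 2}

theorem psi_ker : ∀ x ∈ I, psi x = 0 := by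
  intro x hx
  rw [I, Ideal.mem_span_insert] at hx
  obtain ⟨r1, z1, hz1, rfl⟩ := hx
  rw [Ideal.mem_span_insert] at hz1
  obtain ⟨r2, z2, hz2, rfl⟩ := hz1
  rw [Ideal.mem_span_singleton] at hz2
  obtain ⟨t, rfl⟩ := hz2
  rw [map_add, map_add, mul_comm _ t]
  rw [psi_mul_gen K1, psi_mul_gen K2, psi_mul_gen K3]
  simp

noncomputable def phi : posConeC4 →+ M :=
  QuotientAddGroup.lift I.toAddSubgroup psi psi_ker

theorem phi_mk (p : MvPolynomial (Fin 4) ℤ) : phi (Ideal.Quotient.mk I p) = psi p := rfl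


theorem psi_pow (a b c' d : ℕ) :
    psi (X 0 ^ a * X 1 ^ b * X 2 ^ c' * X 3 ^ d) = nf a b c' d := by
  rw [X_pow_eq_monomial, X_pow_eq_monomial, X_pow_eq_monomial, X_pow_eq_monomial,
    monomial_mul, monomial_mul, monomial_mul, psi_monomial]
  have h0 : ((Finsupp.single 0 a + Finsupp.single 1 b + Finsupp.single 2 c'
      + Finsupp.single 3 d : Fin 4 →₀ ℕ)) 0 = a := by simp [Finsupp.single_apply]
  have h1 : ((Finsupp.single 0 a + Finsupp.single 1 b + Finsupp.single 2 c'
      + Finsupp.single 3 d : Fin 4 →₀ ℕ)) 1 = b := by simp [Finsupp.single_apply]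
  have h2 : ((Finsupp.single 0 a + Finsupp.single 1 b + Finsupp.single 2 c'
      + Finsupp.single 3 d : Fin 4 →₀ ℕ)) 2 = c' := by simp [Finsupp.single_apply]
  have h3 : ((Finsupp.single 0 a + Finsupp.single 1 b + Finsupp.single 2 c'
      + Finsupp.single 3 d : Fin 4 →₀ ℕ)) 3 = d := by simp [Finsupp.single_apply]
  rw [h0, h1, h2, h3, mul_one, mul_one, mul_one, one_smul]

theorem mk_pow_repr (a b c d : ℕ) :
    (Ideal.Quotient.mk I (X 0)) ^ a * (Ideal.Quotient.mk I (X 1)) ^ b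
      * (Ideal.Quotient.mk I (X 2)) ^ c * (Ideal.Quotient.mk I (X 3)) ^ d
    = Ideal.Quotient.mk I (X 0 ^ a * X 1 ^ b * X 2 ^ c * X 3 ^ d) := by
  rw [map_mul, map_mul, map_mul, map_pow, map_pow, map_pow, map_pow]

theorem repr_free (j k : ℕ) : posConeGen (.free j k)
    = Ideal.Quotient.mk I (X 0 ^ 0 * X 1 ^ 0 * X 2 ^ j * X 3 ^ k) := by
  show (Ideal.Quotient.mk I (X 2)) ^ j * (Ideal.Quotient.mk I (X 3)) ^ k = _
  rw [← mk_pow_repr]; ring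

theorem repr_four (i j k : ℕ) : posConeGen (.four i j k)
    = Ideal.Quotient.mk I (X 0 ^ 0 * X 1 ^ (i+1) * X 2 ^ j * X 3 ^ k) := by
  show (Ideal.Quotient.mk I (X 1)) ^ (i+1) * (Ideal.Quotient.mk I (X 2)) ^ j
      * (Ideal.Quotient.mk I (X 3)) ^ k = _
  rw [← mk_pow_repr]; ring

theorem repr_twoA (i l j : ℕ) : posConeGen (.twoA i l j)
    = Ideal.Quotient.mk I (X 0 ^ (i+1) * X 1 ^ l * X 2 ^ j * X 3 ^ 0) := by
  show (Ideal.Quotient.mk I (X 0)) ^ (i+1) * (Ideal.Quotient.mk I (X 1)) ^ l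
      * (Ideal.Quotient.mk I (X 2)) ^ j = _
  rw [← mk_pow_repr]; ring

theorem repr_twoU (l j k : ℕ) : posConeGen (.twoU l j k)
    = Ideal.Quotient.mk I (X 0 ^ 1 * X 1 ^ l * X 2 ^ j * X 3 ^ (k+1)) := by
  show (Ideal.Quotient.mk I (X 0)) * (Ideal.Quotient.mk I (X 1)) ^ l
      * (Ideal.Quotient.mk I (X 2)) ^ j * (Ideal.Quotient.mk I (X 3)) ^ (k+1) = _
  rw [← mk_pow_repr]; ring

theorem phi_gen (i : PosConeIdx) : phi (posConeGen i) = e i := by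
  cases i with
  | free j k => rw [repr_free, phi_mk, psi_pow]; rfl
  | four i j k => rw [repr_four, phi_mk, psi_pow]; rfl
  | twoA i l j => rw [repr_twoA, phi_mk, psi_pow]; rfl
  | twoU l j k => rw [repr_twoU, phi_mk, psi_pow]; rfl

theorem of_eq_zero_component {i : PosConeIdx} {x : tgt i}
    (h : DirectSum.of tgt i x = 0) : x = 0 := by
  have := congrArg (fun v : M => v i) h
  simpa only [DirectSum.of_eq_same, DFinsupp.zero_apply] using this

theorem tor_four (i j k : ℕ) : (4:ℤ) • posConeGen (.four i j k) = 0 := by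
  rw [repr_four, ← map_zsmul (Ideal.Quotient.mk I), Ideal.Quotient.eq_zero_iff_mem]
  have h4 : ((4:ℤ) : MvPolynomial (Fin 4) ℤ) = 4 := by norm_num
  have : ((4:ℤ) • (X 0 ^ 0 * X 1 ^ (i+1) * X 2 ^ j * X 3 ^ k) : MvPolynomial (Fin 4) ℤ)
      = (4 * X 1) * (X 0 ^ 0 * X 1 ^ i * X 2 ^ j * X 3 ^ k) := by
    rw [zsmul_eq_mul, h4]; ring
  rw [this]
  exact I.mul_mem_right _ (Ideal.subset_span (by simp))

theorem tor_twoA (i l j : ℕ) : (2:ℤ) • posConeGen (.twoA i l j) = 0 := by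
  rw [repr_twoA, ← map_zsmul (Ideal.Quotient.mk I), Ideal.Quotient.eq_zero_iff_mem]
  have h2 : ((2:ℤ) : MvPolynomial (Fin 4) ℤ) = 2 := by norm_num
  have : ((2:ℤ) • (X 0 ^ (i+1) * X 1 ^ l * X 2 ^ j * X 3 ^ 0) : MvPolynomial (Fin 4) ℤ)
      = (2 * X 0) * (X 0 ^ i * X 1 ^ l * X 2 ^ j * X 3 ^ 0) := by
    rw [zsmul_eq_mul, h2]; ring
  rw [this]
  exact I.mul_mem_right _ (Ideal.subset_span (by simp))

theorem tor_twoU (l j k : ℕ) : (2:ℤ) • posConeGen (.twoU l j k) = 0 := by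
  rw [repr_twoU, ← map_zsmul (Ideal.Quotient.mk I), Ideal.Quotient.eq_zero_iff_mem]
  have h2 : ((2:ℤ) : MvPolynomial (Fin 4) ℤ) = 2 := by norm_num
  have : ((2:ℤ) • (X 0 ^ 1 * X 1 ^ l * X 2 ^ j * X 3 ^ (k+1)) : MvPolynomial (Fin 4) ℤ)
      = (2 * X 0) * (X 0 ^ 0 * X 1 ^ l * X 2 ^ j * X 3 ^ (k+1)) := by
    rw [zsmul_eq_mul, h2]; ring
  rw [this]
  exact I.mul_mem_right _ (Ideal.subset_span (by simp))


theorem one_ne_zero' (i : PosConeIdx) : one i ≠ 0 := by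
  cases i with
  | free j k => exact (one_ne_zero : (1:ℤ) ≠ 0)
  | four i j k => exact (by decide : (1 : ZMod 4) ≠ 0)
  | twoA i l j => exact (by decide : (1 : ZMod 2) ≠ 0)
  | twoU l j k => exact (by decide : (1 : ZMod 2) ≠ 0)

theorem gen_ne_zero (i : PosConeIdx) : posConeGen i ≠ 0 := by
  intro h
  have := congrArg phi h
  rw [phi_gen, map_zero, e] at this
  exact one_ne_zero' i (of_eq_zero_component this)

theorem ord_free (j k : ℕ) : addOrderOf (posConeGen (.free j k)) = 0 := by
  rw [addOrderOf_eq_zero_iff']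
  intro n hn h
  have h2 := congrArg phi h
  rw [map_nsmul, phi_gen, map_zero, e, ← map_nsmul (DirectSum.of tgt (.free j k))] at h2
  have h3 : n • (1 : ℤ) = 0 := of_eq_zero_component h2
  have h4 : (n : ℤ) = 0 := by simpa using h3
  exact hn.ne' (by exact_mod_cast h4)

theorem ord_four (i j k : ℕ) : addOrderOf (posConeGen (.four i j k)) = 4 := by
  haveI : Fact (Nat.Prime 2) := ⟨Nat.prime_two⟩
  have h := addOrderOf_eq_prime_pow (x := posConeGen (.four i j k)) (p := 2) (n := 1)
    ?_ ?_
  · rw [h]; norm_num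
  · intro hc
    have h2 := congrArg phi hc
    rw [map_nsmul, phi_gen, map_zero, e, ← map_nsmul (DirectSum.of tgt (.four i j k))] at h2
    have h3 := of_eq_zero_component h2
    have h4 : (2 : ℕ) • (1 : ZMod 4) = 0 := h3
    revert h4; decide
  · have ht := tor_four i j k
    rw [show ((4:ℤ)) = ((4:ℕ) : ℤ) from rfl, natCast_zsmul] at ht
    rw [show (2:ℕ)^(1+1) = 4 from rfl]
    exact ht

theorem ord_twoA (i l j : ℕ) : addOrderOf (posConeGen (.twoA i l j)) = 2 := by
  haveI : Fact (Nat.Prime 2) := ⟨Nat.prime_two⟩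
  refine addOrderOf_eq_prime ?_ (gen_ne_zero _)
  have ht := tor_twoA i l j
  rw [show ((2:ℤ)) = ((2:ℕ) : ℤ) from rfl, natCast_zsmul] at ht
  exact ht

theorem ord_twoU (l j k : ℕ) : addOrderOf (posConeGen (.twoU l j k)) = 2 := by
  haveI : Fact (Nat.Prime 2) := ⟨Nat.prime_two⟩
  refine addOrderOf_eq_prime ?_ (gen_ne_zero _)
  have ht := tor_twoU l j k
  rw [show ((2:ℤ)) = ((2:ℕ) : ℤ) from rfl, natCast_zsmul] at ht
  exact ht

theorem indep : iSupIndep (fun i => AddSubgroup.zmultiples (posConeGen i)) := by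
  rw [iSupIndep_def]
  intro i
  rw [AddSubgroup.disjoint_def]
  intro x hx hx'
  obtain ⟨n, rfl⟩ := AddSubgroup.mem_zmultiples_iff.mp hx
  have hker : (⨆ (j) (_ : j ≠ i), AddSubgroup.zmultiples (posConeGen j)) ≤
      ((DFinsupp.evalAddMonoidHom i : M →+ tgt i).comp phi).ker := by
    refine iSup_le fun j => iSup_le fun hj => ?_
    rw [AddSubgroup.zmultiples_le]
    show (phi (posConeGen j)) i = 0
    rw [phi_gen, e]
    exact DirectSum.of_eq_of_ne _ _ _ (Ne.symm hj)
  have h0 : ((DFinsupp.evalAddMonoidHom i : M →+ tgt i).comp phi) (n • posConeGen i) = 0 :=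
    hker hx'
  rw [map_zsmul] at h0
  have he : ((DFinsupp.evalAddMonoidHom i : M →+ tgt i).comp phi) (posConeGen i) = one i := by
    show (phi (posConeGen i)) i = one i
    rw [phi_gen, e, DirectSum.of_eq_same]
  rw [he] at h0
  have h1 : n • one i = 0 := h0
  cases i with
  | free j k =>
    have h2 : n = 0 := by
      have h3 : n • (1 : ℤ) = 0 := h1
      rwa [zsmul_eq_mul, mul_one] at h3
    rw [h2, zero_smul]
  | four i j k =>
    have h2 : ((n : ℤ) : ZMod 4) = 0 := by
      have : n • (1 : ZMod 4) = 0 := h1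
      rwa [zsmul_eq_mul, mul_one] at this
    have h4 : (4:ℤ) ∣ n := by
      have h5 := (ZMod.intCast_zmod_eq_zero_iff_dvd n 4).mp h2
      exact_mod_cast h5
    obtain ⟨m, rfl⟩ := h4
    have h6 : ((4:ℤ) * m) • posConeGen (.four i j k) = m • ((4:ℤ) • posConeGen (.four i j k)) := by
      rw [mul_smul]
      exact smul_comm _ _ _
    rw [h6, tor_four, smul_zero]
  | twoA i l j =>
    have h2 : ((n : ℤ) : ZMod 2) = 0 := by
      have : n • (1 : ZMod 2) = 0 := h1
      rwa [zsmul_eq_mul, mul_one] at this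
    have h4 : (2:ℤ) ∣ n := by
      have h5 := (ZMod.intCast_zmod_eq_zero_iff_dvd n 2).mp h2
      exact_mod_cast h5
    obtain ⟨m, rfl⟩ := h4
    have h6 : ((2:ℤ) * m) • posConeGen (.twoA i l j) = m • ((2:ℤ) • posConeGen (.twoA i l j)) := by
      rw [mul_smul]
      exact smul_comm _ _ _
    rw [h6, tor_twoA, smul_zero]
  | twoU l j k =>
    have h2 : ((n : ℤ) : ZMod 2) = 0 := by
      have : n • (1 : ZMod 2) = 0 := h1
      rwa [zsmul_eq_mul, mul_one] at this
    have h4 : (2:ℤ) ∣ n := by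
      have h5 := (ZMod.intCast_zmod_eq_zero_iff_dvd n 2).mp h2
      exact_mod_cast h5
    obtain ⟨m, rfl⟩ := h4
    have h6 : ((2:ℤ) * m) • posConeGen (.twoU l j k) = m • ((2:ℤ) • posConeGen (.twoU l j k)) := by
      rw [mul_smul]
      exact smul_comm _ _ _
    rw [h6, tor_twoU, smul_zero]

theorem mk_mem (p q r s : ℕ) : Ideal.Quotient.mk I (X 0 ^ p * X 1 ^ q * X 2 ^ r * X 3 ^ s)
    ∈ (⨆ i, AddSubgroup.zmultiples (posConeGen i)) := by
  have hmem : ∀ i : PosConeIdx,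
      posConeGen i ∈ (⨆ i, AddSubgroup.zmultiples (posConeGen i)) := fun i =>
    le_iSup (fun i => AddSubgroup.zmultiples (posConeGen i)) i (AddSubgroup.mem_zmultiples _)
  rcases p with _ | p
  · rcases q with _ | q
    · rw [← repr_free]; exact hmem _
    · rw [← repr_four]; exact hmem _
  · rcases s with _ | s
    · rw [← repr_twoA]; exact hmem _
    · rcases p with _ | p
      · rw [show (0:ℕ)+1 = 1 from rfl, ← repr_twoU]; exact hmem _
      · rcases p with _ | p
        · have key : Ideal.Quotient.mk I (X 0 ^ (1+1) * X 1 ^ q * X 2 ^ r * X 3 ^ (s+1))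
              = (2:ℤ) • posConeGen (.four q (r+1) s) := by
            rw [repr_four, ← map_zsmul (Ideal.Quotient.mk I),
              Ideal.Quotient.mk_eq_mk_iff_sub_mem]
            have h2 : ((2:ℤ) : MvPolynomial (Fin 4) ℤ) = 2 := by norm_num
            have : (X 0 ^ (1+1) * X 1 ^ q * X 2 ^ r * X 3 ^ (s+1)
                - (2:ℤ) • (X 0 ^ 0 * X 1 ^ (q+1) * X 2 ^ (r+1) * X 3 ^ s)
                : MvPolynomial (Fin 4) ℤ)
                = (X 0 ^ 2 * X 3 - 2 * X 1 * X 2) * (X 1 ^ q * X 2 ^ r * X 3 ^ s) := by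
              rw [zsmul_eq_mul, h2]; ring
            rw [this]
            exact I.mul_mem_right _ (Ideal.subset_span (by simp))
          rw [key]
          exact AddSubgroup.zsmul_mem _ (hmem _) _
        · have key : Ideal.Quotient.mk I (X 0 ^ (p+1+1+1) * X 1 ^ q * X 2 ^ r * X 3 ^ (s+1))
              = 0 := by
            rw [Ideal.Quotient.eq_zero_iff_mem]
            have : (X 0 ^ (p+1+1+1) * X 1 ^ q * X 2 ^ r * X 3 ^ (s+1)
                : MvPolynomial (Fin 4) ℤ)
                = (X 0 ^ 2 * X 3 - 2 * X 1 * X 2) * (X 0 ^ (p+1) * X 1 ^ q * X 2 ^ r * X 3 ^ s)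
                  + (2 * X 0) * (X 0 ^ p * X 1 ^ (q+1) * X 2 ^ (r+1) * X 3 ^ s) := by
              ring
            rw [this]
            exact add_mem (I.mul_mem_right _ (Ideal.subset_span (by simp)))
              (I.mul_mem_right _ (Ideal.subset_span (by simp)))
          rw [key]
          exact zero_mem _

theorem X_prod_eq (d : Fin 4 →₀ ℕ) :
    (X 0 ^ (d 0) * X 1 ^ (d 1) * X 2 ^ (d 2) * X 3 ^ (d 3) : MvPolynomial (Fin 4) ℤ)
      = monomial d 1 := by
  have hd : d = Finsupp.single 0 (d 0) + Finsupp.single 1 (d 1) + Finsupp.single 2 (d 2)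
      + Finsupp.single 3 (d 3) := by
    ext i; fin_cases i <;> simp [Finsupp.single_apply]
  rw [X_pow_eq_monomial, X_pow_eq_monomial, X_pow_eq_monomial, X_pow_eq_monomial,
    monomial_mul, monomial_mul, monomial_mul, ← hd]
  norm_num

theorem span_top : (⨆ i, AddSubgroup.zmultiples (posConeGen i)) = ⊤ := by
  rw [eq_top_iff]
  intro x hx
  clear hx
  obtain ⟨p, rfl⟩ := Ideal.Quotient.mk_surjective x
  induction p using MvPolynomial.induction_on' with
  | add p q hp hq => rw [map_add]; exact AddSubgroup.add_mem _ hp hq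
  | monomial d c =>
    have hm : (monomial d c : MvPolynomial (Fin 4) ℤ) = c • monomial d 1 := by
      rw [smul_monomial, smul_eq_mul, mul_one]
    rw [hm, map_zsmul (Ideal.Quotient.mk I), ← X_prod_eq]
    exact AddSubgroup.zsmul_mem _ (mk_mem _ _ _ _) _

end PC

/-- As an abelian group,
`R = ℤ[a_α, a_λ, u_{2α}, u_λ]/(2a_α, 4a_λ, a_α²u_λ − 2a_λu_{2α})` decomposes as
`ℤ[u_{2α},u_λ] ⊕ (ℤ/4)[u_{2α},u_λ]⟨a_λ^i⟩_{i≥1} ⊕ (ℤ/2)[u_{2α},a_λ]⟨a_α^i⟩_{i≥1}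
⊕ (ℤ/2)[u_{2α},a_λ]⟨u_λ^i⟩_{i≥1}⟨a_α⟩`: the listed monomials have the listed additive
orders (`addOrderOf x = 0` meaning infinite order), the cyclic subgroups they generate
are independent, and together they span, so `R` is the internal direct sum of these
cyclic groups. -/
theorem stmt_6 :
    (∀ j k, addOrderOf (posConeGen (.free j k)) = 0) ∧
    (∀ i j k, addOrderOf (posConeGen (.four i j k)) = 4) ∧
    (∀ i l j, addOrderOf (posConeGen (.twoA i l j)) = 2) ∧
    (∀ l j k, addOrderOf (posConeGen (.twoU l j k)) = 2) ∧
    iSupIndep (fun i => AddSubgroup.zmultiples (posConeGen i)) ∧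
    (⨆ i, AddSubgroup.zmultiples (posConeGen i)) = ⊤ :=
  ⟨PC.ord_free, PC.ord_four, PC.ord_twoA, PC.ord_twoU, PC.indep, PC.span_top⟩
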